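/- arXiv:0906.5510 — 3 statements merged into one kernel-verified Lean document; each statement's English description precedes it below -/
import Mathlib

section
/- Let ℤ_{p^n} be the ring of integers of the unramified degree-n extension of ℚ_p and σ its Frobenius automorphism. For α, β, γ ∈ ℤ_{p^n} with α a unit and β ≡ 0 mod p, the equation α·σ(X) + β·X + γ = 0 has a unique solution X in ℤ_{p^n}. -/
open WittVector Function

section aux
variable (p : ℕ) [hp : Fact p.Prime] {k : Type*} [Field k] [CharP k p] [PerfectRing k p]

local notation "𝕎" => WittVector p

lemma aux_mul_pow_coeff : ∀ (m : ℕ) (z : 𝕎 k) (i : ℕ), i < m → (z * (p:𝕎 k) ^ m).coeff i = 0 := by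
  intro m
  induction m with
  | zero => intro z i hi; omega
  | succ m ih =>
    intro z i hi
    have h1 : z * (p:𝕎 k) ^ (m+1) = (z * (p:𝕎 k) ^ m) * (p : 𝕎 k) := by ring
    rw [h1]
    cases i with
    | zero => exact mul_charP_coeff_zero _
    | succ i =>
      rw [mul_charP_coeff_succ, ih z i (by omega), zero_pow hp.out.ne_zero]

lemma aux_iterate_versch (m : ℕ) (y : 𝕎 k) :
    ∃ z : 𝕎 k, verschiebung^[m] y = z * (p:𝕎 k) ^ m := by
  induction m with
  | zero => exact ⟨y, by simp⟩
  | succ m ih =>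
    obtain ⟨z, hz⟩ := ih
    refine ⟨(frobeniusEquiv p k).symm z, ?_⟩
    rw [iterate_succ_apply', hz]
    have h2 : z * (p:𝕎 k) ^ m =
        frobenius ((frobeniusEquiv p k).symm (z * (p:𝕎 k) ^ m)) :=
      ((frobeniusEquiv p k).apply_symm_apply _).symm
    rw [h2, verschiebung_frobenius, map_mul, map_pow, map_natCast]
    ring

lemma aux_versch_coeff_lt : ∀ (m : ℕ) (y : 𝕎 k) (i : ℕ), i < m →
    (verschiebung^[m] y).coeff i = 0 := by
  intro m
  induction m with
  | zero => intro y i hi; omega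
  | succ m ih =>
    intro y i hi
    rw [iterate_succ_apply']
    cases i with
    | zero => exact verschiebung_coeff_zero _
    | succ i => rw [verschiebung_coeff_succ]; exact ih y i (by omega)

lemma aux_dvd_iff_coeff (m : ℕ) (x : 𝕎 k) :
    (p:𝕎 k) ^ m ∣ x ↔ ∀ i < m, x.coeff i = 0 := by
  constructor
  · rintro ⟨z, rfl⟩ i hi
    rw [mul_comm]
    exact aux_mul_pow_coeff p m z i hi
  · intro h
    have hx : x = verschiebung^[m] (WittVector.mk p (fun i => x.coeff (i + m))) := by
      ext i
      rcases lt_or_ge i m with hi | hi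
      · rw [h i hi, aux_versch_coeff_lt p m _ i hi]
      · obtain ⟨j, rfl⟩ : ∃ j, i = j + m := ⟨i - m, by omega⟩
        rw [iterate_verschiebung_coeff, coeff_mk]
    obtain ⟨z, hz⟩ := aux_iterate_versch p m (WittVector.mk p (fun i => x.coeff (i + m)))
    exact ⟨z, by rw [hx, hz]; ring⟩

lemma aux_coeff_eq_of_dvd {m : ℕ} {x y : 𝕎 k} (h : (p:𝕎 k) ^ m ∣ x - y)
    {i : ℕ} (hi : i < m) : x.coeff i = y.coeff i := by
  have htr : WittVector.truncate m (x - y) = 0 := by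
    rw [← RingHom.mem_ker, WittVector.mem_ker_truncate]
    exact fun j hj => (aux_dvd_iff_coeff p m (x - y)).1 h j hj
  have h2 : WittVector.truncate (p := p) m x = WittVector.truncate m y := by
    rwa [map_sub, sub_eq_zero] at htr
  have h3 := congrArg (fun t => TruncatedWittVector.coeff ⟨i, hi⟩ t) h2
  simpa [WittVector.coeff_truncate] using h3

lemma aux_dvd_of_coeff_eq {m : ℕ} {x y : 𝕎 k}
    (h : ∀ i < m, x.coeff i = y.coeff i) : (p:𝕎 k) ^ m ∣ x - y := by
  rw [aux_dvd_iff_coeff]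
  intro i hi
  have htr : WittVector.truncate (p := p) m x = WittVector.truncate m y := by
    ext j
    simp only [WittVector.coeff_truncate]
    exact h j j.2
  have h0 : WittVector.truncate m (x - y) = 0 := by rw [map_sub, htr, sub_self]
  rw [← RingHom.mem_ker, WittVector.mem_ker_truncate] at h0
  exact h0 i hi

lemma aux_symm_dvd {m : ℕ} {x : 𝕎 k} (h : (p:𝕎 k) ^ m ∣ x) :
    (p:𝕎 k) ^ m ∣ (frobeniusEquiv p k).symm x := by
  obtain ⟨z, rfl⟩ := h
  exact ⟨(frobeniusEquiv p k).symm z, by rw [map_mul, map_pow, map_natCast]⟩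

lemma aux_eq_of_forall_pow_dvd {x y : 𝕎 k}
    (h : ∀ m : ℕ, (p:𝕎 k) ^ m ∣ x - y) : x = y := by
  ext i
  exact aux_coeff_eq_of_dvd p (h (i + 1)) (Nat.lt_succ_self i)

lemma aux_unique_solution (α β γ : 𝕎 k) (hα : IsUnit α) (hβ : (p : 𝕎 k) ∣ β) :
    ∃! X : 𝕎 k, α * frobenius X + β * X + γ = 0 := by
  obtain ⟨u, rfl⟩ := hα
  have huu : (↑u : 𝕎 k) * ↑u⁻¹ = 1 := u.mul_inv
  have hiu : (↑u⁻¹ : 𝕎 k) * ↑u = 1 := u.inv_mul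
  set T : 𝕎 k → 𝕎 k :=
    fun X => (frobeniusEquiv p k).symm (-((↑u⁻¹ : 𝕎 k) * (γ + β * X))) with hT
  -- fixed points of T are exactly the solutions
  have hfix : ∀ X : 𝕎 k, T X = X ↔ (↑u : 𝕎 k) * frobenius X + β * X + γ = 0 := by
    intro X
    simp only [hT]
    have happ : ∀ Y : 𝕎 k, frobeniusEquiv p k Y = frobenius Y :=
      fun Y => congrFun (frobeniusEquiv_apply p k) Y
    have key : (frobeniusEquiv p k).symm (-((↑u⁻¹ : 𝕎 k) * (γ + β * X))) = X ↔
        -((↑u⁻¹ : 𝕎 k) * (γ + β * X)) = frobenius X := by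
      constructor
      · intro h
        have h2 := congrArg (frobeniusEquiv p k) h
        rwa [(frobeniusEquiv p k).apply_symm_apply, happ] at h2
      · intro h
        have h2 := congrArg (frobeniusEquiv p k).symm (h.trans (happ X).symm)
        rwa [(frobeniusEquiv p k).symm_apply_apply] at h2
    rw [key]
    constructor
    · intro h
      linear_combination (-(↑u : 𝕎 k)) * h + (-(γ + β * X)) * huu
    · intro h
      linear_combination (-(↑u⁻¹ : 𝕎 k)) * h + (frobenius X) * hiu
  -- contraction property
  have hcontr : ∀ (X Y : 𝕎 k) (m : ℕ), (p:𝕎 k) ^ m ∣ X - Y →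
      (p:𝕎 k) ^ (m + 1) ∣ T X - T Y := by
    intro X Y m hd
    have hTXY : T X - T Y = (frobeniusEquiv p k).symm ((↑u⁻¹ : 𝕎 k) * β * (Y - X)) := by
      simp only [hT]
      have harg : -((↑u⁻¹ : 𝕎 k) * (γ + β * X)) - -((↑u⁻¹ : 𝕎 k) * (γ + β * Y)) =
          (↑u⁻¹ : 𝕎 k) * β * (Y - X) := by ring
      rw [← map_sub, harg]
    rw [hTXY]
    apply aux_symm_dvd
    obtain ⟨b, hb⟩ := hβ
    obtain ⟨d, hd'⟩ := hd
    refine ⟨-((↑u⁻¹ : 𝕎 k) * b * d), ?_⟩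
    have hYX : Y - X = -(X - Y) := by ring
    rw [hb, hYX, hd']
    ring
  -- uniqueness
  have huniq : ∀ X Y : 𝕎 k, T X = X → T Y = Y → X = Y := by
    intro X Y hX hY
    apply aux_eq_of_forall_pow_dvd p
    intro m
    induction m with
    | zero => simpa using one_dvd _
    | succ m ih =>
      have := hcontr X Y m ih
      rwa [hX, hY] at this
  -- existence: iterate T starting from 0
  set a : ℕ → 𝕎 k := fun m => T^[m] 0 with ha
  have hTa : ∀ m : ℕ, T (a m) = a (m + 1) := by
    intro m
    rw [ha]
    exact (Function.iterate_succ_apply' T m 0).symm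
  have hstep : ∀ m : ℕ, (p:𝕎 k) ^ m ∣ a (m + 1) - a m := by
    intro m
    induction m with
    | zero => simpa using one_dvd _
    | succ m ih =>
      rw [← hTa (m + 1), ← hTa m]
      exact hcontr _ _ m (by rw [hTa m]; exact ih)
  have hcauchy : ∀ (m j : ℕ), (p:𝕎 k) ^ m ∣ a (m + j) - a m := by
    intro m j
    induction j with
    | zero => simp
    | succ j ih =>
      have h1 : a (m + (j + 1)) - a m =
          (a ((m + j) + 1) - a (m + j)) + (a (m + j) - a m) := by
        have : m + (j + 1) = (m + j) + 1 := by omega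
        rw [this]; ring
      rw [h1]
      exact dvd_add (dvd_trans (pow_dvd_pow _ (Nat.le_add_right m j)) (hstep (m + j))) ih
  set L : 𝕎 k := WittVector.mk p (fun i => (a (i + 1)).coeff i) with hL
  have hLcoeff : ∀ (m : ℕ) (i : ℕ), i < m → L.coeff i = (a m).coeff i := by
    intro m i hi
    have h1 : L.coeff i = (a (i + 1)).coeff i := by rw [hL, coeff_mk]
    rw [h1]
    obtain ⟨j, hj⟩ : ∃ j, m = (i + 1) + j := ⟨m - (i + 1), by omega⟩
    have h2 : (p:𝕎 k) ^ (i + 1) ∣ a m - a (i + 1) := by rw [hj]; exact hcauchy (i + 1) j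
    exact (aux_coeff_eq_of_dvd p h2 (Nat.lt_succ_self i)).symm
  have hLa : ∀ m : ℕ, (p:𝕎 k) ^ m ∣ L - a m := fun m =>
    aux_dvd_of_coeff_eq p (fun i hi => hLcoeff m i hi)
  have hTL : T L = L := by
    apply aux_eq_of_forall_pow_dvd p
    intro m
    have h1 : (p:𝕎 k) ^ (m + 1) ∣ T L - T (a m) := hcontr _ _ m (hLa m)
    have h3 : (p:𝕎 k) ^ (m + 1) ∣ a (m + 1) - L := by
      have := (hLa (m + 1)).neg_right
      rwa [neg_sub] at this
    have h4 : T L - L = (T L - T (a m)) + (a (m + 1) - L) := by rw [hTa m]; ring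
    rw [h4]
    exact dvd_trans (pow_dvd_pow _ (Nat.le_succ m)) (dvd_add h1 h3)
  refine ⟨L, (hfix L).1 hTL, ?_⟩
  intro Y hY
  exact huniq Y L ((hfix Y).2 hY) hTL

end aux

theorem stmt_3 (p n : ℕ) [Fact p.Prime] (hn : 0 < n)
    (α β γ : WittVector p (GaloisField p n))
    (hα : IsUnit α) (hβ : (p : WittVector p (GaloisField p n)) ∣ β) :
    ∃! X : WittVector p (GaloisField p n),
      α * WittVector.frobenius X + β * X + γ = 0 := by
  exact aux_unique_solution p α β γ hα hβ
end

section
/- Generalized Newton lift with Frobenius: let ℤ_{p^n} be the unramified extension of ℤ_p with Frobenius σ, and φ(Y,Z) a polynomial in two variables over ℤ_{p^n}. Suppose x₀ ∈ ℤ_{p^n} satisfies φ(x₀, σ(x₀)) ≡ 0 mod p^{2k+1}, where k is the p-adic valuation of (∂φ/∂Z)(x₀, σ(x₀)), and suppose (∂φ/∂Y)(x₀, σ(x₀)) ≡ 0 mod p^{k+1}. Then for every N there exists X ∈ ℤ_{p^n} with φ(X, σ(X)) ≡ 0 mod p^{N+k} and X ≡ x₀ mod p^{k+1}. -/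
open MvPolynomial

lemma taylor2 {R : Type*} [CommRing R] (φ : MvPolynomial (Fin 2) R) (a b h g : R) :
    ∃ A B C : R, eval ![a + h, b + g] φ =
      eval ![a, b] φ + h * eval ![a, b] (pderiv 0 φ) + g * eval ![a, b] (pderiv 1 φ)
      + (h ^ 2 * A + h * g * B + g ^ 2 * C) := by
  induction φ using MvPolynomial.induction_on with
  | C r => exact ⟨0, 0, 0, by simp⟩
  | add q r hq hr =>
    obtain ⟨A, B, C, hQ⟩ := hq
    obtain ⟨A', B', C', hR⟩ := hr
    exact ⟨A + A', B + B', C + C', by simp only [map_add, hQ, hR]; ring⟩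
  | mul_X q i hq =>
    obtain ⟨A, B, C, hQ⟩ := hq
    obtain rfl | rfl : i = 0 ∨ i = 1 := by omega
    · refine ⟨eval ![a, b] (pderiv 0 q) + A * (a + h),
        eval ![a, b] (pderiv 1 q) + B * (a + h), C * (a + h), ?_⟩
      rw [map_mul, map_mul, pderiv_mul, pderiv_mul, pderiv_X_self,
        pderiv_X_of_ne (show (0 : Fin 2) ≠ 1 by decide), hQ]
      simp only [map_add, map_mul, eval_X, Matrix.cons_val_zero, mul_one, map_zero, mul_zero,
        add_zero]
      ring
    · refine ⟨A * (b + g), eval ![a, b] (pderiv 0 q) + B * (b + g),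
        eval ![a, b] (pderiv 1 q) + C * (b + g), ?_⟩
      rw [map_mul, map_mul, pderiv_mul, pderiv_mul, pderiv_X_self,
        pderiv_X_of_ne (show (1 : Fin 2) ≠ 0 by decide), hQ]
      simp only [map_add, map_mul, eval_X, Matrix.cons_val_one, Matrix.head_cons, Matrix.cons_val_zero, mul_one,
        map_zero, mul_zero, add_zero]
      ring

lemma eval_sub_dvd {R : Type*} [CommRing R] (ψ : MvPolynomial (Fin 2) R) (a b a' b' c : R)
    (h1 : c ∣ a' - a) (h2 : c ∣ b' - b) : c ∣ eval ![a', b'] ψ - eval ![a, b] ψ := by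
  obtain ⟨A, B, C, hT⟩ := taylor2 ψ a b (a' - a) (b' - b)
  rw [show a + (a' - a) = a' by ring, show b + (b' - b) = b' by ring] at hT
  have : eval ![a', b'] ψ - eval ![a, b] ψ =
      (a' - a) * (eval ![a, b] (pderiv 0 ψ) + (a' - a) * A + (b' - b) * B) +
        (b' - b) * (eval ![a, b] (pderiv 1 ψ) + (b' - b) * C) := by
    rw [hT]; ring
  rw [this]
  exact dvd_add (h1.mul_right _) (h2.mul_right _)

lemma isUnit_of_not_dvd_wv {p : ℕ} [Fact p.Prime] {K : Type*} [Field K] [CharP K p]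
    [PerfectRing K p] (e : WittVector p K) (he : ¬ (p : WittVector p K) ∣ e) : IsUnit e := by
  have h0 : e ≠ 0 := by rintro rfl; exact he (dvd_zero _)
  obtain ⟨m, b, hb⟩ := WittVector.exists_eq_pow_p_mul' e h0
  cases m with
  | zero => rw [hb]; simpa using b.isUnit
  | succ m => exact absurd ⟨(p : WittVector p K) ^ m * b, by rw [hb]; ring⟩ he

lemma newton_aux {p : ℕ} [Fact p.Prime] {K : Type*} [Field K] [CharP K p] [PerfectRing K p]
    (φ : MvPolynomial (Fin 2) (WittVector p K)) (x₀ : WittVector p K) (k : ℕ)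
    (hk : (p : WittVector p K) ^ k ∣ eval ![x₀, WittVector.frobenius x₀] (pderiv 1 φ))
    (hk' : ¬ (p : WittVector p K) ^ (k + 1) ∣ eval ![x₀, WittVector.frobenius x₀] (pderiv 1 φ))
    (h0 : (p : WittVector p K) ^ (2 * k + 1) ∣ eval ![x₀, WittVector.frobenius x₀] φ)
    (hY : (p : WittVector p K) ^ (k + 1) ∣ eval ![x₀, WittVector.frobenius x₀] (pderiv 0 φ)) :
    ∀ N : ℕ, ∃ X : WittVector p K,
      (p : WittVector p K) ^ (N + k) ∣ eval ![X, WittVector.frobenius X] φ ∧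
        (p : WittVector p K) ^ (k + 1) ∣ X - x₀ := by
  have key : ∀ M : ℕ, ∃ X : WittVector p K,
      (p : WittVector p K) ^ (M + (2 * k + 1)) ∣ eval ![X, WittVector.frobenius X] φ ∧
        (p : WittVector p K) ^ (k + 1) ∣ X - x₀ := by
    intro M
    induction M with
    | zero => exact ⟨x₀, by simpa using h0, by simp⟩
    | succ M ih =>
      obtain ⟨X, hX1, hX2⟩ := ih
      have hfs : (p : WittVector p K) ^ (k + 1) ∣
          WittVector.frobenius X - WittVector.frobenius x₀ := by
        obtain ⟨t, ht⟩ := hX2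
        exact ⟨WittVector.frobenius t, by
          rw [← map_sub, ht, map_mul, map_pow, map_natCast]⟩
      set d := eval ![X, WittVector.frobenius X] (pderiv 1 φ) with hd
      have hdd : (p : WittVector p K) ^ (k + 1) ∣
          d - eval ![x₀, WittVector.frobenius x₀] (pderiv 1 φ) :=
        eval_sub_dvd _ _ _ _ _ _ hX2 hfs
      have hkd : (p : WittVector p K) ^ k ∣ d := by
        have h1 := (pow_dvd_pow (p : WittVector p K) (Nat.le_succ k)).trans hdd
        have := dvd_add h1 hk
        rwa [sub_add_cancel] at this
      have hk'd : ¬ (p : WittVector p K) ^ (k + 1) ∣ d := by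
        intro hdvd
        have := dvd_sub hdvd hdd
        rw [sub_sub_cancel] at this
        exact hk' this
      obtain ⟨e, he⟩ := hkd
      have heu : IsUnit e := by
        refine isUnit_of_not_dvd_wv e fun hpe => hk'd ?_
        obtain ⟨t, ht⟩ := hpe
        exact ⟨t, by rw [he, ht, pow_succ]; ring⟩
      obtain ⟨eu, hue⟩ := heu
      have hYX : (p : WittVector p K) ^ (k + 1) ∣ eval ![X, WittVector.frobenius X] (pderiv 0 φ) := by
        have h1 := eval_sub_dvd (pderiv 0 φ) x₀ (WittVector.frobenius x₀) X
          (WittVector.frobenius X) _ hX2 hfs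
        have := dvd_add h1 hY
        rwa [sub_add_cancel] at this
      obtain ⟨e', he'⟩ := hYX
      obtain ⟨c, hc⟩ := hX1
      set v : WittVector p K := -c * ↑eu⁻¹ with hv
      set u : WittVector p K := (WittVector.frobeniusEquiv p K).symm v with hu
      have hfu : WittVector.frobenius u = v := by
        have h1 := (WittVector.frobeniusEquiv p K).apply_symm_apply v
        rwa [WittVector.frobeniusEquiv_apply] at h1
      have hve : v * e = -c := by
        rw [hv, ← hue]
        calc -c * ↑eu⁻¹ * ↑eu = -c * (↑eu⁻¹ * ↑eu) := by ring
          _ = -c := by rw [eu.inv_mul, mul_one]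
      refine ⟨X + (p : WittVector p K) ^ (M + k + 1) * u, ?_, ?_⟩
      · obtain ⟨A, B, C, hT⟩ := taylor2 φ X (WittVector.frobenius X)
          ((p : WittVector p K) ^ (M + k + 1) * u) ((p : WittVector p K) ^ (M + k + 1) * v)
        have hσ : WittVector.frobenius (X + (p : WittVector p K) ^ (M + k + 1) * u) =
            WittVector.frobenius X + (p : WittVector p K) ^ (M + k + 1) * v := by
          rw [map_add, map_mul, map_pow, map_natCast, hfu]
        rw [hσ, hT, hc, ← hd, he, he']
        refine ⟨u * e' + (p : WittVector p K) ^ M *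
          (u ^ 2 * A + u * v * B + v ^ 2 * C), ?_⟩
        have hve' := hve
        linear_combination (p : WittVector p K) ^ (M + k + 1 + k) * hve'
      · have h1 : X + (p : WittVector p K) ^ (M + k + 1) * u - x₀ =
            (X - x₀) + (p : WittVector p K) ^ (M + k + 1) * u := by ring
        rw [h1]
        exact dvd_add hX2 ((pow_dvd_pow _ (by omega)).mul_right u)
  intro N
  obtain ⟨X, h1, h2⟩ := key N
  exact ⟨X, (pow_dvd_pow _ (by omega)).trans h1, h2⟩

theorem stmt_7 (p n : ℕ) [Fact p.Prime] (hn : 0 < n)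
    (φ : MvPolynomial (Fin 2) (WittVector p (GaloisField p n)))
    (x₀ : WittVector p (GaloisField p n)) (k : ℕ)
    (hk : (p : WittVector p (GaloisField p n)) ^ k ∣
        MvPolynomial.eval ![x₀, WittVector.frobenius x₀] (MvPolynomial.pderiv 1 φ))
    (hk' : ¬ (p : WittVector p (GaloisField p n)) ^ (k + 1) ∣
        MvPolynomial.eval ![x₀, WittVector.frobenius x₀] (MvPolynomial.pderiv 1 φ))
    (h0 : (p : WittVector p (GaloisField p n)) ^ (2 * k + 1) ∣
        MvPolynomial.eval ![x₀, WittVector.frobenius x₀] φ)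
    (hY : (p : WittVector p (GaloisField p n)) ^ (k + 1) ∣
        MvPolynomial.eval ![x₀, WittVector.frobenius x₀] (MvPolynomial.pderiv 0 φ)) :
    ∀ N : ℕ, ∃ X : WittVector p (GaloisField p n),
      (p : WittVector p (GaloisField p n)) ^ (N + k) ∣
          MvPolynomial.eval ![X, WittVector.frobenius X] φ ∧
        (p : WittVector p (GaloisField p n)) ^ (k + 1) ∣ X - x₀ :=
  newton_aux φ x₀ k hk hk' h0 hY
end

section
/- Let 𝔽_q be a finite field and (a_i)_{i≥0} a sequence in 𝔽_q satisfying a linear recurrence of order n. Set g(X) = Σ_{i=0}^{2n−1} a_i X^{2n−1−i} and f(X) = X^{2n}. Then the minimal polynomial c(X) of the sequence (a_i) is, up to a unit, the cofactor of g of minimal degree in an extended-Euclidean relation c(X)g(X) + q(X)f(X) = r(X) with deg r ≤ n − 1. -/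
open Polynomial

section Aux
variable {K : Type*} [Field K] {n : ℕ} {a : ℕ → K}

private lemma sum_window_eq (p : Polynomial K) (hp : p.natDegree ≤ n) (i : ℕ) :
    ∑ j ∈ Finset.range (p.natDegree + 1), p.coeff j * a (i + j)
      = ∑ j ∈ Finset.range (n + 1), p.coeff j * a (i + j) := by
  apply Finset.sum_subset
  · exact Finset.range_subset_range.2 (by omega)
  · intro j hj hj'
    have h : p.natDegree < j := by
      simp only [Finset.mem_range] at hj hj'; omega
    simp [Polynomial.coeff_eq_zero_of_natDegree_lt h]

private lemma coeff_mul_g (p : Polynomial K) (hp : p.natDegree ≤ n) (t : ℕ) (ht : t < n)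
    {g : Polynomial K}
    (hg : g = ∑ i ∈ Finset.range (2 * n), C (a i) * X ^ (2 * n - 1 - i)) :
    (p * g).coeff (2 * n - 1 - t) = ∑ j ∈ Finset.range (n + 1), p.coeff j * a (t + j) := by
  subst hg
  rw [Finset.mul_sum]
  have hterm : ∀ i : ℕ, p * (C (a i) * X ^ (2 * n - 1 - i))
      = C (a i) * p * X ^ (2 * n - 1 - i) := fun i => by ring
  simp_rw [hterm]
  rw [Polynomial.finset_sum_coeff]
  simp_rw [Polynomial.coeff_mul_X_pow', Polynomial.coeff_C_mul]
  have hstep : ∀ i ∈ Finset.range (2 * n),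
      (if 2 * n - 1 - i ≤ 2 * n - 1 - t then a i * p.coeff (2 * n - 1 - t - (2 * n - 1 - i)) else 0)
        = (if t ≤ i then a i * p.coeff (i - t) else 0) := by
    intro i hi
    simp only [Finset.mem_range] at hi
    by_cases h : t ≤ i
    · rw [if_pos h, if_pos (by omega)]
      congr 2
      omega
    · rw [if_neg (by omega), if_neg h]
  rw [Finset.sum_congr rfl hstep]
  have h1 : ∑ i ∈ Finset.range (2 * n), (if t ≤ i then a i * p.coeff (i - t) else 0)
      = ∑ i ∈ Finset.Ico t (2 * n), a i * p.coeff (i - t) := by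
    rw [← Finset.sum_filter]
    congr 1
    ext i
    simp only [Finset.mem_filter, Finset.mem_range, Finset.mem_Ico]
    omega
  rw [h1, Finset.sum_Ico_eq_sum_range]
  have h2 : ∀ j ∈ Finset.range (2 * n - t), a (t + j) * p.coeff (t + j - t)
      = p.coeff j * a (t + j) := by
    intro j _
    rw [show t + j - t = j from by omega, mul_comm]
  rw [Finset.sum_congr rfl h2]
  symm
  apply Finset.sum_subset
  · exact Finset.range_subset_range.2 (by omega)
  · intro j hj hj'
    have h : p.natDegree < j := by
      simp only [Finset.mem_range] at hj hj'; omega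
    simp [Polynomial.coeff_eq_zero_of_natDegree_lt h]

end Aux

section Aux2
variable {K : Type*} [Field K] {n : ℕ} {a : ℕ → K}

private lemma window_zero_of_euclid (hn : 0 < n) {g f : Polynomial K}
    (hg : g = ∑ i ∈ Finset.range (2 * n), C (a i) * X ^ (2 * n - 1 - i))
    (hf : f = X ^ (2 * n))
    (c' q' r' : Polynomial K) (hc' : c'.natDegree ≤ n)
    (hrel : c' * g + q' * f = r') (hr : r'.degree < n) (t : ℕ) (ht : t < n) :
    ∑ j ∈ Finset.range (n + 1), c'.coeff j * a (t + j) = 0 := by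
  rw [← coeff_mul_g c' hc' t ht hg]
  have h1 : (c' * g).coeff (2 * n - 1 - t)
      = r'.coeff (2 * n - 1 - t) - (q' * f).coeff (2 * n - 1 - t) := by
    have := congrArg (fun p : Polynomial K => p.coeff (2 * n - 1 - t)) hrel
    simp only [Polynomial.coeff_add] at this
    linear_combination this
  have h2 : r'.coeff (2 * n - 1 - t) = 0 := by
    apply Polynomial.coeff_eq_zero_of_degree_lt
    refine lt_of_lt_of_le hr ?_
    exact_mod_cast Nat.cast_le.2 (by omega : n ≤ 2 * n - 1 - t)
  have h3 : (q' * f).coeff (2 * n - 1 - t) = 0 := by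
    rw [hf, Polynomial.coeff_mul_X_pow', if_neg (by omega)]
  rw [h1, h2, h3, sub_zero]

private lemma extend_all (c c' : Polynomial K) (hcmonic : c.Monic) (hcdeg : c.natDegree ≤ n)
    (hann : ∀ i : ℕ, ∑ j ∈ Finset.range (c.natDegree + 1), c.coeff j * a (i + j) = 0)
    (hbase : ∀ t < n, ∑ j ∈ Finset.range (n + 1), c'.coeff j * a (t + j) = 0) :
    ∀ t, ∑ j ∈ Finset.range (n + 1), c'.coeff j * a (t + j) = 0 := by
  intro t
  induction t using Nat.strong_induction_on with
  | _ t IH =>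
    by_cases ht : t < n
    · exact hbase t ht
    · push_neg at ht
      set d := c.natDegree with hd
      have key : ∑ k ∈ Finset.range (d + 1), c.coeff k *
          (∑ j ∈ Finset.range (n + 1), c'.coeff j * a (t - d + k + j)) = 0 := by
        have swap : ∑ k ∈ Finset.range (d + 1), c.coeff k *
            (∑ j ∈ Finset.range (n + 1), c'.coeff j * a (t - d + k + j))
            = ∑ j ∈ Finset.range (n + 1), c'.coeff j *
              (∑ k ∈ Finset.range (d + 1), c.coeff k * a ((t - d + j) + k)) := by
          simp_rw [Finset.mul_sum]
          rw [Finset.sum_comm]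
          apply Finset.sum_congr rfl
          intro j _
          apply Finset.sum_congr rfl
          intro k _
          rw [show t - d + k + j = t - d + j + k from by omega]
          ring
        rw [swap]
        have hz : ∀ j ∈ Finset.range (n + 1),
            c'.coeff j * (∑ k ∈ Finset.range (d + 1), c.coeff k * a ((t - d + j) + k)) = 0 := by
          intro j _
          rw [hann (t - d + j), mul_zero]
        rw [Finset.sum_congr rfl hz, Finset.sum_const_zero]
      rw [Finset.sum_range_succ] at key
      have hlast : c.coeff d = 1 := hcmonic.coeff_natDegree
      have hrest : ∀ k ∈ Finset.range d, c.coeff k *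
          (∑ j ∈ Finset.range (n + 1), c'.coeff j * a (t - d + k + j)) = 0 := by
        intro k hk
        simp only [Finset.mem_range] at hk
        rw [IH (t - d + k) (by omega), mul_zero]
      rw [Finset.sum_congr rfl hrest, Finset.sum_const_zero, zero_add, hlast, one_mul,
        show t - d + d = t from by omega] at key
      exact key

private lemma monicize_ann (c' : Polynomial K) (hc0 : c' ≠ 0) (hdeg : c'.natDegree ≤ n)
    (hall : ∀ t, ∑ j ∈ Finset.range (n + 1), c'.coeff j * a (t + j) = 0) :
    ∃ c'' : Polynomial K, c''.Monic ∧ c''.degree = c'.degree ∧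
      ∀ i : ℕ, ∑ j ∈ Finset.range (c''.natDegree + 1), c''.coeff j * a (i + j) = 0 := by
  refine ⟨c' * C c'.leadingCoeff⁻¹, Polynomial.monic_mul_leadingCoeff_inv hc0,
    Polynomial.degree_mul_leadingCoeff_inv c' hc0, ?_⟩
  intro i
  have hnd : (c' * C c'.leadingCoeff⁻¹).natDegree ≤ n := by
    rw [Polynomial.natDegree_mul_leadingCoeff_inv c' hc0]; exact hdeg
  rw [sum_window_eq _ hnd]
  have : ∀ j ∈ Finset.range (n + 1), (c' * C c'.leadingCoeff⁻¹).coeff j * a (i + j)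
      = (c'.coeff j * a (i + j)) * c'.leadingCoeff⁻¹ := by
    intro j _
    rw [Polynomial.coeff_mul_C]
    ring
  rw [Finset.sum_congr rfl this, ← Finset.sum_mul, hall i, zero_mul]

end Aux2

theorem stmt_16 (K : Type*) [Field K] [Fintype K] (n : ℕ) (hn : 0 < n)
    (a : ℕ → K)
    (c : Polynomial K) (hcmonic : c.Monic) (hcdeg : c.natDegree ≤ n)
    (hann : ∀ i : ℕ, ∑ j ∈ Finset.range (c.natDegree + 1), c.coeff j * a (i + j) = 0)
    (hmin : ∀ c' : Polynomial K, c'.Monic →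
      (∀ i : ℕ, ∑ j ∈ Finset.range (c'.natDegree + 1), c'.coeff j * a (i + j) = 0) →
      c.degree ≤ c'.degree)
    (g f : Polynomial K)
    (hg : g = ∑ i ∈ Finset.range (2 * n), C (a i) * X ^ (2 * n - 1 - i))
    (hf : f = X ^ (2 * n)) :
    (∃ q r : Polynomial K, c * g + q * f = r ∧ r.degree < n) ∧
      (∀ c' q' r' : Polynomial K, c' ≠ 0 → c' * g + q' * f = r' → r'.degree < n →
        c.degree ≤ c'.degree) ∧
      (∀ c' q' r' : Polynomial K, c' ≠ 0 → c' * g + q' * f = r' → r'.degree < n →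
        c'.degree ≤ c.degree → ∃ u : K, u ≠ 0 ∧ c' = C u * c) := by
  have hfm : f.Monic := by rw [hf]; exact (monic_X_pow _)
  have hfd : f.degree = (2 * n : ℕ) := by rw [hf, degree_X_pow]
  have hSc : ∀ t, ∑ j ∈ Finset.range (n + 1), c.coeff j * a (t + j) = 0 := by
    intro t
    rw [← sum_window_eq c hcdeg t]
    exact hann t
  -- Part 1
  have part1 : ∃ q r : Polynomial K, c * g + q * f = r ∧ r.degree < n := by
    refine ⟨-(c * g /ₘ f), c * g %ₘ f, ?_, ?_⟩
    · linear_combination -Polynomial.modByMonic_add_div (c * g) f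
    · rw [Polynomial.degree_lt_iff_coeff_zero]
      intro m hm
      by_cases hm2 : 2 * n ≤ m
      · apply Polynomial.coeff_eq_zero_of_degree_lt
        refine lt_of_lt_of_le (Polynomial.degree_modByMonic_lt _ hfm) ?_
        rw [hfd]
        exact_mod_cast Nat.cast_le.2 hm2
      · push_neg at hm2
        have hmod : (c * g) %ₘ f = c * g - f * (c * g /ₘ f) := by
          linear_combination Polynomial.modByMonic_add_div (c * g) f
        rw [hmod, Polynomial.coeff_sub]
        have hfq : (f * (c * g /ₘ f)).coeff m = 0 := by
          rw [hf, mul_comm, Polynomial.coeff_mul_X_pow', if_neg (by omega)]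
        have hcg : (c * g).coeff m = 0 := by
          have ht : 2 * n - 1 - (2 * n - 1 - m) = m := by omega
          rw [← ht, coeff_mul_g c hcdeg (2 * n - 1 - m) (by omega) hg]
          exact hSc _
        rw [hfq, hcg, sub_zero]
  refine ⟨part1, ?_, ?_⟩
  -- Part 2
  · intro c' q' r' hc0 hrel hr
    by_cases hbig : n ≤ c'.natDegree
    · have h1 : c.degree ≤ (n : WithBot ℕ) := Polynomial.natDegree_le_iff_degree_le.1 hcdeg
      refine h1.trans ?_
      rw [Polynomial.degree_eq_natDegree hc0]
      exact_mod_cast Nat.cast_le.2 hbig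
    · push_neg at hbig
      have hnd : c'.natDegree ≤ n := le_of_lt hbig
      have hbase := fun t ht => window_zero_of_euclid hn hg hf c' q' r' hnd hrel hr t ht
      have hall := extend_all c c' hcmonic hcdeg hann hbase
      obtain ⟨c'', hm, hdeq, hann''⟩ := monicize_ann c' hc0 hnd hall
      have := hmin c'' hm hann''
      rwa [hdeq] at this
  -- Part 3
  · intro c' q' r' hc0 hrel hr hle
    have hge : c.degree ≤ c'.degree := by
      by_cases hbig : n ≤ c'.natDegree
      · have h1 : c.degree ≤ (n : WithBot ℕ) := Polynomial.natDegree_le_iff_degree_le.1 hcdeg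
        refine h1.trans ?_
        rw [Polynomial.degree_eq_natDegree hc0]
        exact_mod_cast Nat.cast_le.2 hbig
      · push_neg at hbig
        have hnd : c'.natDegree ≤ n := le_of_lt hbig
        have hbase := fun t ht => window_zero_of_euclid hn hg hf c' q' r' hnd hrel hr t ht
        have hall := extend_all c c' hcmonic hcdeg hann hbase
        obtain ⟨c'', hm, hdeq, hann''⟩ := monicize_ann c' hc0 hnd hall
        have := hmin c'' hm hann''
        rwa [hdeq] at this
    have hdeq : c'.degree = c.degree := le_antisymm hle hge
    have hnd : c'.natDegree ≤ n :=
      le_trans (Polynomial.natDegree_le_natDegree hle) hcdeg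
    have hbase := fun t ht => window_zero_of_euclid hn hg hf c' q' r' hnd hrel hr t ht
    have hall' := extend_all c c' hcmonic hcdeg hann hbase
    set u := c'.leadingCoeff with hu
    have hu0 : u ≠ 0 := Polynomial.leadingCoeff_ne_zero.2 hc0
    refine ⟨u, hu0, ?_⟩
    by_contra hne
    set p := c' - C u * c with hp
    have hp0 : p ≠ 0 := by
      intro h
      apply hne
      rw [hp] at h
      linear_combination h
    have hpd : p.degree < c.degree := by
      rw [hp]
      have hld : (C u * c).leadingCoeff = u := by
        rw [Polynomial.leadingCoeff_mul, Polynomial.leadingCoeff_C, hcmonic.leadingCoeff, mul_one]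
      have hdd : c'.degree = (C u * c).degree := by
        rw [Polynomial.degree_mul, Polynomial.degree_C hu0, zero_add, hdeq]
      calc (c' - C u * c).degree < c'.degree :=
            Polynomial.degree_sub_lt hdd hc0 (by rw [hld])
        _ = c.degree := hdeq
    have hpnd : p.natDegree ≤ n := by
      have : p.natDegree ≤ c.natDegree := Polynomial.natDegree_le_natDegree hpd.le
      omega
    have hSp : ∀ t, ∑ j ∈ Finset.range (n + 1), p.coeff j * a (t + j) = 0 := by
      intro t
      have : ∀ j ∈ Finset.range (n + 1), p.coeff j * a (t + j)
          = c'.coeff j * a (t + j) - u * (c.coeff j * a (t + j)) := by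
        intro j _
        rw [hp, Polynomial.coeff_sub, Polynomial.coeff_C_mul]
        ring
      rw [Finset.sum_congr rfl this, Finset.sum_sub_distrib, hall' t, ← Finset.mul_sum,
        hSc t, mul_zero, sub_zero]
    obtain ⟨p'', hm, hdeq', hann''⟩ := monicize_ann p hp0 hpnd hSp
    have hcon := hmin p'' hm hann''
    rw [hdeq'] at hcon
    exact absurd (lt_of_le_of_lt hcon hpd) (lt_irrefl _)
end
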